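/- Let p, q be coprime integers with q > 0, and c_{p/q}((m₁,m₂),(n₁,n₂)) = exp(2πi (p/q) m₂ n₁) on ℤ². For the subgroup H = ℤ·(k,0) ⊕ ℤ·(m,n) with k, n > 0, the restriction of c_{p/q} to H is symmetric if and only if q divides n·k. -/

import Mathlib

/-- The 2-cocycle `c_θ((m₁,m₂),(n₁,n₂)) = exp(2πi θ m₂ n₁)` on `ℤ²`, valued in the
circle group `T`. -/
noncomputable def cθ (θ : ℝ) (x y : ℤ × ℤ) : Circle :=
  Circle.exp (2 * Real.pi * θ * (x.2 : ℝ) * (y.1 : ℝ))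

/-- For `p, q` coprime with `q > 0` and `H = ℤ·(k,0) ⊕ ℤ·(m,n)` with `k, n > 0`,
the restriction of `c_{p/q}` to `H` is symmetric iff `q ∣ n·k`. -/
theorem stmt12 (p q : ℤ) (hq : 0 < q) (hcop : IsCoprime p q)
    (k m n : ℤ) (hk : 0 < k) (hn : 0 < n) :
    (∀ x ∈ AddSubgroup.closure {((k, 0) : ℤ × ℤ), (m, n)},
      ∀ y ∈ AddSubgroup.closure {((k, 0) : ℤ × ℤ), (m, n)},
        cθ ((p : ℝ) / (q : ℝ)) x y = cθ ((p : ℝ) / (q : ℝ)) y x) ↔ q ∣ n * k := by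
  have hq0 : (q : ℝ) ≠ 0 := Int.cast_ne_zero.2 hq.ne'
  constructor
  · intro h
    have h1 : ((m, n) : ℤ × ℤ) ∈ AddSubgroup.closure {((k, 0) : ℤ × ℤ), (m, n)} :=
      AddSubgroup.subset_closure (by simp)
    have h2 : ((k, 0) : ℤ × ℤ) ∈ AddSubgroup.closure {((k, 0) : ℤ × ℤ), (m, n)} :=
      AddSubgroup.subset_closure (by simp)
    have := h _ h1 _ h2
    rw [cθ, cθ, Circle.exp_eq_exp] at this
    obtain ⟨t, ht⟩ := this
    simp only [Int.cast_zero] at ht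
    -- ht : 2π (p/q) n k = 2π (p/q) 0 m + t (2π)
    have h2pi : (2 * Real.pi) ≠ 0 := by positivity
    have hpq : (p : ℝ) * n * k = t * q := by
      field_simp at ht
      exact mul_left_cancel₀ h2pi (by linear_combination (2 * Real.pi) * ht)
    have hdvd : q ∣ p * (n * k) := by
      refine ⟨t, ?_⟩
      have : ((p * (n * k) : ℤ) : ℝ) = ((q * t : ℤ) : ℝ) := by push_cast; linarith [hpq]
      exact_mod_cast this
    exact (hcop.symm).dvd_of_dvd_mul_left hdvd
  · rintro ⟨d, hd⟩ x hx y hy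
    rw [AddSubgroup.mem_closure_pair] at hx hy
    obtain ⟨a, b, rfl⟩ := hx
    obtain ⟨a', b', rfl⟩ := hy
    rw [cθ, cθ, Circle.exp_eq_exp]
    refine ⟨p * d * (b * a' - b' * a), ?_⟩
    have hnk : (n : ℝ) * k = q * d := by exact_mod_cast hd
    simp only [Prod.smul_snd, Prod.smul_fst, Prod.fst_add, Prod.snd_add, zsmul_eq_mul,
      Int.cast_add, Int.cast_mul, smul_eq_mul, Int.cast_zero, Int.cast_sub, Int.cast_mul,
      mul_zero, add_zero, Prod.fst_mul, Prod.snd_mul, Prod.fst_intCast, Prod.snd_intCast]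
    push_cast
    field_simp
    linear_combination ((p:ℝ) * ((b:ℝ) * a' - (b':ℝ) * a)) * hnk
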